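/- Let ε > 0 and 0 < a < 1. Then for every continuously differentiable function f : [0,∞) → ℝ whose support is contained in [0, a), one has ∫₀^∞ f(r)² / ( r (−ln r)^{2+ε} ) dr ≤ (1 / (ε (−ln a)^ε)) ∫₀^∞ f′(r)² r dr. -/

import Mathlib

open MeasureTheory

section HardyAux
open Set Real Filter

lemma hardyF_cont {ε a : ℝ} (hε : 0 < ε) (ha0 : 0 < a) (ha1 : a < 1) :
    ContinuousOn (fun r : ℝ => (-Real.log r) ^ (-ε) / ε) (Set.Icc 0 a) := by
  intro x hx
  rcases eq_or_lt_of_le hx.1 with h0 | h0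
  · subst h0
    have hT : Tendsto (fun r : ℝ => (-Real.log r) ^ (-ε) / ε) (nhdsWithin 0 (Set.Ioi 0)) (nhds 0) := by
      have h1 : Tendsto (fun r : ℝ => -Real.log r) (nhdsWithin 0 (Set.Ioi 0)) atTop :=
        tendsto_neg_atBot_atTop.comp Real.tendsto_log_nhdsGT_zero
      have h2 := (tendsto_rpow_neg_atTop hε).comp h1
      simpa using h2.div_const ε
    have h0eq : ((-Real.log (0:ℝ)) ^ (-ε) / ε) = 0 := by
      simp [Real.zero_rpow (neg_ne_zero.mpr hε.ne')]
    have hsub : Set.Icc (0:ℝ) a \ {0} ⊆ Set.Ioi 0 := fun y hy =>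
      lt_of_le_of_ne hy.1.1 (Ne.symm hy.2)
    rw [← continuousWithinAt_diff_self]
    have : Tendsto (fun r : ℝ => (-Real.log r) ^ (-ε) / ε)
        (nhdsWithin 0 (Set.Icc 0 a \ {0})) (nhds 0) :=
      hT.mono_left (nhdsWithin_mono _ hsub)
    rw [ContinuousWithinAt, h0eq]
    exact this
  · have hlog : 0 < -Real.log x := by
      have : Real.log x < 0 := Real.log_neg h0 (lt_of_le_of_lt hx.2 ha1)
      linarith
    apply ContinuousWithinAt.div_const
    apply ContinuousAt.continuousWithinAt
    exact ContinuousAt.rpow_const ((Real.continuousAt_log h0.ne').neg) (Or.inl hlog.ne')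

lemma hardyF_deriv {ε a : ℝ} (hε : 0 < ε) (ha1 : a < 1) {x : ℝ} (hx : x ∈ Set.Ioo 0 a) :
    HasDerivAt (fun r : ℝ => (-Real.log r) ^ (-ε) / ε)
      ((-Real.log x) ^ (-(1 + ε)) * x⁻¹) x := by
  have hx0 : 0 < x := hx.1
  have hlog : 0 < -Real.log x := by
    have : Real.log x < 0 := Real.log_neg hx0 (hx.2.trans ha1)
    linarith
  have h1 : HasDerivAt (fun r : ℝ => -Real.log r) (-x⁻¹) x :=
    (Real.hasDerivAt_log hx0.ne').neg
  have h2 : HasDerivAt (fun y : ℝ => y ^ (-ε)) (-ε * (-Real.log x) ^ (-ε - 1)) (-Real.log x) :=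
    Real.hasDerivAt_rpow_const (Or.inl hlog.ne')
  have h3 := (h2.comp x h1).div_const ε
  refine h3.congr_deriv ?_
  have : (-ε - 1) = -(1 + ε) := by ring
  rw [this]
  field_simp

lemma hardyJ {ε a : ℝ} (hε : 0 < ε) (ha0 : 0 < a) (ha1 : a < 1) :
    IntegrableOn (fun r : ℝ => (-Real.log r) ^ (-(1 + ε)) * r⁻¹) (Set.Ioc 0 a) ∧
    ∫ r in Set.Ioc 0 a, (-Real.log r) ^ (-(1 + ε)) * r⁻¹ = (-Real.log a) ^ (-ε) / ε := by
  have hcont := hardyF_cont hε ha0 ha1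
  have hderiv : ∀ x ∈ Set.Ioo 0 a, HasDerivAt (fun r : ℝ => (-Real.log r) ^ (-ε) / ε)
      ((-Real.log x) ^ (-(1 + ε)) * x⁻¹) x := fun x hx => hardyF_deriv hε ha1 hx
  have hpos : ∀ x ∈ Set.Ioo 0 a, 0 ≤ (-Real.log x) ^ (-(1 + ε)) * x⁻¹ := by
    intro x hx
    have h2 : Real.log x < 0 := Real.log_neg hx.1 (hx.2.trans ha1)
    have h3 : (0:ℝ) ≤ -Real.log x := by linarith
    exact mul_nonneg (Real.rpow_nonneg h3 _) (inv_nonneg.mpr hx.1.le)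
  have hint : IntegrableOn (fun r : ℝ => (-Real.log r) ^ (-(1 + ε)) * r⁻¹) (Set.Ioc 0 a) :=
    intervalIntegral.integrableOn_deriv_of_nonneg hcont hderiv hpos
  refine ⟨hint, ?_⟩
  have hii : IntervalIntegrable (fun r : ℝ => (-Real.log r) ^ (-(1 + ε)) * r⁻¹) volume 0 a := by
    rw [intervalIntegrable_iff_integrableOn_Ioc_of_le ha0.le]
    exact hint
  have := intervalIntegral.integral_eq_sub_of_hasDeriv_right_of_le ha0.le hcont
    (fun x hx => (hderiv x hx).hasDerivWithinAt) hii
  rw [intervalIntegral.integral_of_le ha0.le] at this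
  rw [this]
  simp [Real.zero_rpow (neg_ne_zero.mpr hε.ne')]

lemma hardy_pointwise {a : ℝ} (ha0 : 0 < a) (ha1 : a < 1) (f : ℝ → ℝ)
    (hf : ContDiff ℝ 1 f) (hfa : f a = 0)
    (hIint : IntegrableOn (fun t : ℝ => deriv f t ^ 2 * t) (Set.Ioi 0))
    {r : ℝ} (hr : r ∈ Set.Ioo 0 a) :
    f r ^ 2 ≤ (∫ t in Set.Ioi (0:ℝ), deriv f t ^ 2 * t) * (-Real.log r) := by
  set I := ∫ t in Set.Ioi (0:ℝ), deriv f t ^ 2 * t with hI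
  have hIpos : 0 ≤ I := setIntegral_nonneg measurableSet_Ioi fun t ht =>
    mul_nonneg (sq_nonneg _) (le_of_lt ht)
  have hd : Continuous (deriv f) := hf.continuous_deriv le_rfl
  have hr0 : 0 < r := hr.1
  have hra : r < a := hr.2
  -- FTC
  have hFTC : ∫ t in r..a, deriv f t = f a - f r :=
    intervalIntegral.integral_deriv_eq_sub (fun x _ => (hf.differentiable one_ne_zero) x)
      (hd.intervalIntegrable _ _)
  have hfr : f r = -∫ t in Set.Ioc r a, deriv f t := by
    rw [← intervalIntegral.integral_of_le hra.le, hFTC, hfa]; ring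
  -- Cauchy-Schwarz setup
  set μ := volume.restrict (Set.Ioc r a) with hμ
  have hfin : IsFiniteMeasure μ := by
    rw [hμ]; exact ⟨by simp [Real.volume_Ioc, lt_top_iff_ne_top]⟩
  set u := fun t : ℝ => |deriv f t| * Real.sqrt t with hu
  set v := fun t : ℝ => (Real.sqrt t)⁻¹ with hv
  have hucont : Continuous u := (hd.abs).mul Real.continuous_sqrt
  have huL2 : MemLp u (ENNReal.ofReal 2) μ := by
    obtain ⟨C, hC⟩ := (isCompact_Icc (a := r) (b := a)).exists_bound_of_continuousOn
      hucont.continuousOn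
    refine MemLp.of_bound hucont.aestronglyMeasurable C ?_
    rw [hμ, ae_restrict_iff' measurableSet_Ioc]
    exact Filter.Eventually.of_forall fun t ht => hC t (Set.Ioc_subset_Icc_self ht)
  have hvmeas : AEStronglyMeasurable v μ :=
    (Real.continuous_sqrt.measurable.inv).aestronglyMeasurable
  have hvL2 : MemLp v (ENNReal.ofReal 2) μ := by
    refine MemLp.of_bound hvmeas ((Real.sqrt r)⁻¹) ?_
    rw [hμ, ae_restrict_iff' measurableSet_Ioc]
    refine Filter.Eventually.of_forall fun t ht => ?_
    have h1 : 0 < Real.sqrt r := Real.sqrt_pos.mpr hr0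
    have h2 : Real.sqrt r ≤ Real.sqrt t := Real.sqrt_le_sqrt ht.1.le
    rw [Real.norm_eq_abs, abs_of_nonneg (inv_nonneg.mpr (Real.sqrt_nonneg t))]
    exact inv_anti₀ h1 h2
  have hpq : Real.HolderConjugate 2 2 := Real.HolderConjugate.two_two
  have hCS := MeasureTheory.integral_mul_le_Lp_mul_Lq_of_nonneg hpq
    (Filter.Eventually.of_forall fun t => mul_nonneg (abs_nonneg _) (Real.sqrt_nonneg t))
    (Filter.Eventually.of_forall fun t => inv_nonneg.mpr (Real.sqrt_nonneg t)) huL2 hvL2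
  -- identify the three integrals
  have huv : ∫ t, u t * v t ∂μ = ∫ t in Set.Ioc r a, |deriv f t| := by
    rw [hμ]
    refine setIntegral_congr_fun measurableSet_Ioc fun t ht => ?_
    have : Real.sqrt t ≠ 0 := (Real.sqrt_pos.mpr (hr0.trans ht.1)).ne'
    simp only [hu, hv]
    field_simp
  have hA : ∫ t, u t ^ (2:ℝ) ∂μ = ∫ t in Set.Ioc r a, deriv f t ^ 2 * t := by
    rw [hμ]
    refine setIntegral_congr_fun measurableSet_Ioc fun t ht => ?_
    have ht0 : 0 ≤ t := (hr0.trans ht.1).le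
    rw [hu]
    rw [show ((2:ℝ)) = ((2:ℕ) : ℝ) by norm_num, Real.rpow_natCast]
    rw [mul_pow, sq_abs, Real.sq_sqrt ht0]
  have hB : ∫ t, v t ^ (2:ℝ) ∂μ = Real.log a - Real.log r := by
    rw [hμ]
    have : ∫ t in Set.Ioc r a, v t ^ (2:ℝ) = ∫ t in Set.Ioc r a, t⁻¹ := by
      refine setIntegral_congr_fun measurableSet_Ioc fun t ht => ?_
      have ht0 : 0 ≤ t := (hr0.trans ht.1).le
      rw [hv, show ((2:ℝ)) = ((2:ℕ) : ℝ) by norm_num, Real.rpow_natCast]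
      rw [inv_pow, Real.sq_sqrt ht0]
    rw [this, ← intervalIntegral.integral_of_le hra.le,
      integral_inv_of_pos hr0 (hr0.trans hra),
      Real.log_div (hr0.trans hra).ne' hr0.ne']
  have hAle : ∫ t in Set.Ioc r a, deriv f t ^ 2 * t ≤ I := by
    rw [hI]
    refine setIntegral_mono_set hIint ?_ ?_
    · refine (ae_restrict_iff' measurableSet_Ioi).mpr (Filter.Eventually.of_forall fun t ht =>
        mul_nonneg (sq_nonneg _) (le_of_lt ht))
    · exact Filter.Eventually.of_forall fun t (ht : t ∈ Set.Ioc r a) => hr0.trans ht.1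
  have hAnn : 0 ≤ ∫ t in Set.Ioc r a, deriv f t ^ 2 * t :=
    setIntegral_nonneg measurableSet_Ioc fun t ht => mul_nonneg (sq_nonneg _) (hr0.trans ht.1).le
  have hBle : Real.log a - Real.log r ≤ -Real.log r := by
    have : Real.log a < 0 := Real.log_neg ha0 ha1
    linarith
  have hBnn : (0:ℝ) ≤ Real.log a - Real.log r := by
    have := Real.log_le_log hr0 hra.le
    linarith
  -- assemble
  have h1 : |f r| ≤ ∫ t in Set.Ioc r a, |deriv f t| := by
    rw [hfr, abs_neg]
    have := norm_integral_le_integral_norm (μ := volume.restrict (Set.Ioc r a)) (fun t => deriv f t)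
    simpa [Real.norm_eq_abs] using this
  have h2 : (∫ t in Set.Ioc r a, |deriv f t|) ≤
      (∫ t in Set.Ioc r a, deriv f t ^ 2 * t) ^ ((1:ℝ)/2) *
      (Real.log a - Real.log r) ^ ((1:ℝ)/2) := by
    rw [← hA, ← hB, ← huv]; exact hCS
  have h3 : f r ^ 2 ≤ ((∫ t in Set.Ioc r a, deriv f t ^ 2 * t) ^ ((1:ℝ)/2) *
      (Real.log a - Real.log r) ^ ((1:ℝ)/2)) ^ 2 := by
    rw [← sq_abs]
    exact pow_le_pow_left₀ (abs_nonneg _) (h1.trans h2) 2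
  have h4 : ((∫ t in Set.Ioc r a, deriv f t ^ 2 * t) ^ ((1:ℝ)/2) *
      (Real.log a - Real.log r) ^ ((1:ℝ)/2)) ^ 2 =
      (∫ t in Set.Ioc r a, deriv f t ^ 2 * t) * (Real.log a - Real.log r) := by
    rw [mul_pow, ← Real.rpow_natCast (_ ^ ((1:ℝ)/2)) 2, ← Real.rpow_natCast (_ ^ ((1:ℝ)/2)) 2,
      ← Real.rpow_mul hAnn, ← Real.rpow_mul hBnn]
    norm_num
  calc f r ^ 2 ≤ (∫ t in Set.Ioc r a, deriv f t ^ 2 * t) * (Real.log a - Real.log r) := by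
        rw [← h4]; exact h3
    _ ≤ I * (-Real.log r) :=
        mul_le_mul hAle hBle hBnn hIpos

end HardyAux

open Set Real Filter in
/-- Logarithmically weighted radial Hardy inequality: for `ε > 0`,
`0 < a < 1` and any `C¹` function `f` on `[0,∞)` supported in `[0, a)`,
`∫₀^∞ f(r)² / (r (−ln r)^{2+ε}) dr ≤ (1/(ε (−ln a)^ε)) ∫₀^∞ f′(r)² r dr`. -/
theorem stmt_0 (ε a : ℝ) (hε : 0 < ε) (ha0 : 0 < a) (ha1 : a < 1)
    (f : ℝ → ℝ) (hf : ContDiff ℝ 1 f)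
    (hsupp : Function.support f ⊆ Set.Ico 0 a) :
    ∫ r in Set.Ioi (0:ℝ), f r ^ 2 / (r * (-Real.log r) ^ (2 + ε)) ≤
      (1 / (ε * (-Real.log a) ^ ε)) * ∫ r in Set.Ioi (0:ℝ), deriv f r ^ 2 * r := by
  have hloga : Real.log a < 0 := Real.log_neg ha0 ha1
  have hla : 0 < -Real.log a := by linarith
  have hd : Continuous (deriv f) := hf.continuous_deriv le_rfl
  have hfzero : ∀ r, a ≤ r → f r = 0 := by
    intro r hr
    by_contra h
    have := hsupp h
    exact absurd this.2 (not_lt.mpr hr)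
  have hderiv0 : ∀ r, a < r → deriv f r = 0 := by
    intro r hr
    have hev : f =ᶠ[nhds r] (fun _ => 0) := by
      filter_upwards [Ioi_mem_nhds hr] with x hx
      exact hfzero x (le_of_lt hx)
    rw [hev.deriv_eq]
    simp
  -- integrability of the RHS integrand
  have hIint : IntegrableOn (fun t : ℝ => deriv f t ^ 2 * t) (Set.Ioi 0) := by
    rw [← Set.Ioc_union_Ioi_eq_Ioi ha0.le]
    refine IntegrableOn.union ?_ ?_
    · exact ((hd.pow 2).mul continuous_id).integrableOn_Ioc
    · refine (integrableOn_congr_fun (g := fun _ => (0:ℝ)) ?_ measurableSet_Ioi).mpr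
        (integrableOn_zero)
      intro t ht
      simp [hderiv0 t ht]
  set I := ∫ t in Set.Ioi (0:ℝ), deriv f t ^ 2 * t with hI
  have hI0 : 0 ≤ I := setIntegral_nonneg measurableSet_Ioi fun t ht =>
    mul_nonneg (sq_nonneg _) (le_of_lt ht)
  obtain ⟨hJint, hJval⟩ := hardyJ (a := a) hε ha0 ha1
  set h := fun r : ℝ => (-Real.log r) ^ (-(1 + ε)) * r⁻¹ with hh
  -- pointwise bound on Ioo 0 a
  have hpt : ∀ r ∈ Set.Ioo (0:ℝ) a, f r ^ 2 / (r * (-Real.log r) ^ (2 + ε)) ≤ I * h r := by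
    intro r hr
    have hr0 : 0 < r := hr.1
    have hlr : 0 < -Real.log r := by
      have := Real.log_neg hr0 (hr.2.trans ha1); linarith
    have hpow : 0 < (-Real.log r) ^ (2 + ε) := Real.rpow_pos_of_pos hlr _
    have hpow1 : 0 < (-Real.log r) ^ (1 + ε) := Real.rpow_pos_of_pos hlr _
    have hden : 0 < r * (-Real.log r) ^ (2 + ε) := mul_pos hr0 hpow
    have hnum : f r ^ 2 ≤ I * (-Real.log r) :=
      hardy_pointwise ha0 ha1 f hf (hfzero a le_rfl) hIint hr
    have hsplit : (-Real.log r) ^ (2 + ε) = (-Real.log r) * (-Real.log r) ^ (1 + ε) := by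
      rw [show (2 + ε) = 1 + (1 + ε) by ring, Real.rpow_add hlr, Real.rpow_one]
    have heq : (I * (-Real.log r)) / (r * (-Real.log r) ^ (2 + ε)) = I * h r := by
      show I * -Real.log r / (r * (-Real.log r) ^ (2 + ε)) =
        I * ((-Real.log r) ^ (-(1 + ε)) * r⁻¹)
      rw [Real.rpow_neg hlr.le, hsplit,
        show r * (-Real.log r * (-Real.log r) ^ (1 + ε)) =
          -Real.log r * ((-Real.log r) ^ (1 + ε) * r) by ring,
        mul_comm I (-Real.log r), mul_div_mul_left _ _ hlr.ne',
        div_eq_mul_inv, mul_inv]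
    calc f r ^ 2 / (r * (-Real.log r) ^ (2 + ε))
        ≤ (I * (-Real.log r)) / (r * (-Real.log r) ^ (2 + ε)) := by
          apply div_le_div_of_nonneg_right hnum hden.le
      _ = I * h r := heq
  -- measurability of LHS integrand
  have hgmeas : AEStronglyMeasurable (fun r : ℝ => f r ^ 2 / (r * (-Real.log r) ^ (2 + ε)))
      (volume.restrict (Set.Ioo 0 a)) := by
    refine Measurable.aestronglyMeasurable ?_
    apply Measurable.div
    · exact (hf.continuous.measurable.pow_const 2)
    · exact measurable_id.mul ((Real.measurable_log.neg).pow_const _ |>.comp measurable_id) |>.mono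
        le_rfl le_rfl |>.comp measurable_id |>.mono le_rfl le_rfl
  -- integrability of I * h on Ioo 0 a
  have hIhint : IntegrableOn (fun r : ℝ => I * h r) (Set.Ioo 0 a) := by
    have h1 : IntegrableOn (fun r : ℝ => I * h r) (Set.Ioc 0 a) := hJint.const_mul I
    exact h1.mono_set Set.Ioo_subset_Ioc_self
  -- integrability of LHS integrand on Ioo 0 a
  have hgint : IntegrableOn (fun r : ℝ => f r ^ 2 / (r * (-Real.log r) ^ (2 + ε)))
      (Set.Ioo 0 a) := by
    refine Integrable.mono' hIhint hgmeas ?_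
    rw [ae_restrict_iff' measurableSet_Ioo]
    refine Filter.Eventually.of_forall fun r hr => ?_
    have hr0 : 0 < r := hr.1
    have hlr : 0 < -Real.log r := by
      have := Real.log_neg hr0 (hr.2.trans ha1); linarith
    have hden : 0 ≤ r * (-Real.log r) ^ (2 + ε) :=
      (mul_pos hr0 (Real.rpow_pos_of_pos hlr _)).le
    rw [Real.norm_eq_abs, abs_of_nonneg (div_nonneg (sq_nonneg _) hden)]
    exact hpt r hr
  -- reduce the LHS to an integral over Ioo 0 a
  have hred : ∫ r in Set.Ioi (0:ℝ), f r ^ 2 / (r * (-Real.log r) ^ (2 + ε)) =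
      ∫ r in Set.Ioo (0:ℝ) a, f r ^ 2 / (r * (-Real.log r) ^ (2 + ε)) := by
    rw [setIntegral_congr_fun measurableSet_Ioi
      (g := (Set.Ioo (0:ℝ) a).indicator fun r => f r ^ 2 / (r * (-Real.log r) ^ (2 + ε))) ?_,
      setIntegral_indicator measurableSet_Ioo,
      show Set.Ioi (0:ℝ) ∩ Set.Ioo 0 a = Set.Ioo 0 a from
        Set.inter_eq_self_of_subset_right Set.Ioo_subset_Ioi_self]
    intro r hr
    by_cases hmem : r ∈ Set.Ioo (0:ℝ) a
    · rw [Set.indicator_of_mem hmem]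
    · rw [Set.indicator_of_notMem hmem]
      have hra : a ≤ r := by
        by_contra hcon
        exact hmem ⟨hr, lt_of_not_ge hcon⟩
      simp [hfzero r hra]
  rw [hred]
  calc ∫ r in Set.Ioo (0:ℝ) a, f r ^ 2 / (r * (-Real.log r) ^ (2 + ε))
      ≤ ∫ r in Set.Ioo (0:ℝ) a, I * h r :=
        setIntegral_mono_on hgint hIhint measurableSet_Ioo hpt
    _ = I * ∫ r in Set.Ioo (0:ℝ) a, h r := by rw [integral_const_mul]
    _ = I * ∫ r in Set.Ioc (0:ℝ) a, h r := by rw [integral_Ioc_eq_integral_Ioo]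
    _ = I * ((-Real.log a) ^ (-ε) / ε) := by rw [hJval]
    _ = (1 / (ε * (-Real.log a) ^ ε)) * I := by
        rw [Real.rpow_neg hla.le, div_eq_mul_inv, one_div, mul_inv]
        ring
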